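/- arXiv:2308.06563 — 2 statements merged into one kernel-verified Lean document; each statement's English description precedes it below -/
import Mathlib

section
/- For n ≥ 2, with h = (s_{n-1}-1)(2s_{n-1}-3), a_i = h/s_{n-i} for 2 ≤ i ≤ n, a_1 = s_{n-1}-1, a_0 = s_{n-1}-2, the weights are well-formed: for every index j, gcd of the remaining n weights {a_i : i ≠ j} equals 1. -/
def sylvester : ℕ → ℕ
  | 0 => 2
  | n + 1 => sylvester n * (sylvester n - 1) + 1

lemma sylvester_ge_two (k : ℕ) : 2 ≤ sylvester k := by
  induction k with
  | zero => simp [sylvester]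
  | succ k ih =>
    have h1 : 1 ≤ sylvester k - 1 := by omega
    have := Nat.mul_le_mul ih h1
    simp only [sylvester]
    omega

lemma sylvester_dvd_sub_one {k m : ℕ} (h : k < m) : sylvester k ∣ sylvester m - 1 := by
  induction m with
  | zero => omega
  | succ m ih =>
    have hs := sylvester_ge_two m
    have heq : sylvester (m + 1) - 1 = sylvester m * (sylvester m - 1) := by
      simp only [sylvester]; omega
    rw [heq]
    rcases Nat.lt_succ_iff_lt_or_eq.mp h with h | h
    · exact (ih h).mul_left _
    · subst h; exact Dvd.intro _ rfl

lemma sylvester_coprime {k m : ℕ} (h : k < m) :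
    Nat.Coprime (sylvester k) (sylvester m) := by
  have h1 := sylvester_dvd_sub_one h
  have hs := sylvester_ge_two m
  have h2 : Nat.Coprime (sylvester m - 1) (sylvester m) := by
    have he : sylvester m = (sylvester m - 1) + 1 := by omega
    rw [he]
    exact Nat.coprime_self_add_right.mpr (Nat.coprime_one_right _)
  exact Nat.Coprime.coprime_dvd_left h1 h2

lemma sylvester_coprime' {k m : ℕ} (h : k ≠ m) :
    Nat.Coprime (sylvester k) (sylvester m) := by
  rcases h.lt_or_gt with h | h
  · exact sylvester_coprime h
  · exact (sylvester_coprime h).symm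

lemma sylvester_prod (m : ℕ) :
    ∏ k ∈ Finset.range m, sylvester k = sylvester m - 1 := by
  induction m with
  | zero => simp [sylvester]
  | succ m ih =>
    have heq : sylvester (m + 1) - 1 = sylvester m * (sylvester m - 1) := by
      simp only [sylvester]; omega
    rw [Finset.prod_range_succ, ih, heq, mul_comm]

lemma cofactor_eq {m k : ℕ} (hk : k < m) :
    (sylvester m - 1) / sylvester k
      = ∏ j ∈ (Finset.range m).erase k, sylvester j := by
  have hpos : 0 < sylvester k := by have := sylvester_ge_two k; omega
  rw [← sylvester_prod, ← Finset.mul_prod_erase _ sylvester (Finset.mem_range.mpr hk),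
    Nat.mul_div_cancel_left _ hpos]

lemma key (m : ℕ) (hm : 1 ≤ m) (d : ℕ)
    (hdvd : ∀ k < m, d ∣ (sylvester m - 1) / sylvester k) : d = 1 := by
  have hco : ∀ k < m, Nat.Coprime d (sylvester k) := by
    intro k hk
    have hd := hdvd k hk
    rw [cofactor_eq hk] at hd
    refine Nat.Coprime.coprime_dvd_left hd ?_
    refine Nat.Coprime.prod_left ?_
    intro j hj
    exact sylvester_coprime' (Finset.ne_of_mem_erase hj)
  have h1 : Nat.Coprime d (sylvester m - 1) := by
    rw [← sylvester_prod]
    exact Nat.Coprime.prod_right fun k hk => hco k (Finset.mem_range.mp hk)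
  have h2 : d ∣ sylvester m - 1 :=
    (hdvd 0 hm).trans (Nat.div_dvd_of_dvd (sylvester_dvd_sub_one hm))
  exact (Nat.coprime_self d).mp (Nat.Coprime.coprime_dvd_right h2 h1)

lemma gcd_aux {x a b k : ℕ} (h : b = a + k * x) (h2 : Nat.gcd x a = 1) :
    Nat.Coprime x b := by
  subst h
  unfold Nat.Coprime
  rw [Nat.gcd_add_mul_right_right, h2]

theorem canonical_weights_well_formed (n : ℕ) (hn : 2 ≤ n)
    (a : ℕ → ℕ)
    (ha0 : a 0 = sylvester (n - 1) - 2)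
    (ha1 : a 1 = sylvester (n - 1) - 1)
    (hai : ∀ i, 2 ≤ i → i ≤ n →
      a i = (sylvester (n - 1) - 1) * (2 * sylvester (n - 1) - 3) / sylvester (n - i)) :
    ∀ j ≤ n, Finset.gcd ((Finset.range (n + 1)).erase j) a = 1 := by
  intro j hj
  set m : ℕ := n - 1 with hmdef
  have hm1 : 1 ≤ m := by omega
  set s : ℕ := sylvester m with hsdef
  have hs3 : 3 ≤ s := by
    obtain ⟨t, ht⟩ : ∃ t, m = t + 1 := ⟨m - 1, by omega⟩
    have h2 := sylvester_ge_two t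
    have h1 : 1 ≤ sylvester t - 1 := by omega
    have := Nat.mul_le_mul h2 h1
    rw [hsdef, ht]
    simp only [sylvester]
    omega
  set d : ℕ := Finset.gcd ((Finset.range (n + 1)).erase j) a with hddef
  have hdj : ∀ i, i ≤ n → i ≠ j → d ∣ a i := by
    intro i hi hij
    exact Finset.gcd_dvd (Finset.mem_erase.mpr ⟨hij, Finset.mem_range.mpr (by omega)⟩)
  -- divisibility of d by cofactor times (2s-3), for j ∈ {0,1}
  have hdk : j ≤ 1 → ∀ k < m, d ∣ (s - 1) / sylvester k * (2 * s - 3) := by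
    intro hj1 k hk
    have hi2 : 2 ≤ n - k := by omega
    have hin : n - k ≤ n := by omega
    have hnk : n - (n - k) = k := by omega
    have hd := hdj (n - k) hin (by omega)
    rw [hai (n - k) hi2 hin, hnk] at hd
    have hdvdk : sylvester k ∣ s - 1 := sylvester_dvd_sub_one hk
    have hpos : 0 < sylvester k := by have := sylvester_ge_two k; omega
    obtain ⟨t, ht⟩ := hdvdk
    have hgoal : (s - 1) / sylvester k = t := by
      rw [ht, Nat.mul_div_cancel_left _ hpos]
    rw [hgoal]
    rwa [ht, mul_assoc, Nat.mul_div_cancel_left _ hpos] at hd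
  have hcop12 : Nat.gcd (s - 2) 1 = 1 := Nat.gcd_one_right _
  rcases j with _ | _ | j
  · -- j = 0
    have h1 : d ∣ s - 1 := ha1 ▸ hdj 1 (by omega) (by omega)
    have hcop : Nat.Coprime d (2 * s - 3) := by
      refine Nat.Coprime.coprime_dvd_left h1 (gcd_aux (a := s - 2) (k := 1) (by omega) ?_)
      have : s - 1 = 1 + 1 * (s - 2) := by omega
      rw [Nat.gcd_comm, this, Nat.gcd_add_mul_right_right]
      exact Nat.gcd_one_right _
    refine key m hm1 d ?_
    intro k hk
    exact Nat.Coprime.dvd_of_dvd_mul_right hcop (hdk (by omega) k hk)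
  · -- j = 1
    have h0 : d ∣ s - 2 := ha0 ▸ hdj 0 (by omega) (by omega)
    have hcop : Nat.Coprime d (2 * s - 3) := by
      refine Nat.Coprime.coprime_dvd_left h0 (gcd_aux (a := 1) (k := 2) (by omega) ?_)
      exact Nat.gcd_one_right _
    refine key m hm1 d ?_
    intro k hk
    exact Nat.Coprime.dvd_of_dvd_mul_right hcop (hdk (by omega) k hk)
  · -- j ≥ 2
    have h0 : d ∣ s - 2 := ha0 ▸ hdj 0 (by omega) (by omega)
    have h1 : d ∣ s - 1 := ha1 ▸ hdj 1 (by omega) (by omega)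
    have hsub := Nat.dvd_sub h1 h0
    rw [show s - 1 - (s - 2) = 1 by omega] at hsub
    exact Nat.dvd_one.mp hsub
end

section
/- For n ≥ 1, with h = s_n - 1, a_i = h/s_{n-i} for 1 ≤ i ≤ n, and a_0 = 1 (Sylvester sequence s_k), one has a_0 + a_1 + ... + a_n = h, and every a_i divides h. -/
lemma sylvester_two_le (n : ℕ) : 2 ≤ sylvester n := by
  induction n with
  | zero => simp [sylvester]
  | succ n ih =>
    have : 1 ≤ sylvester n - 1 := by omega
    have := Nat.mul_le_mul ih this
    simp [sylvester]; omega

lemma sylvester_succ_sub_one (n : ℕ) :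
    sylvester (n + 1) - 1 = sylvester n * (sylvester n - 1) := by
  simp [sylvester]

lemma sylvester_dvd (k n : ℕ) (h : k < n) : sylvester k ∣ sylvester n - 1 := by
  induction n with
  | zero => omega
  | succ n ih =>
    rw [sylvester_succ_sub_one]
    rcases Nat.lt_succ_iff_lt_or_eq.mp h with h' | h'
    · exact (ih h').mul_left _
    · subst h'; exact Dvd.intro _ rfl

lemma sylvester_sum (n : ℕ) (hn : 1 ≤ n) :
    (∑ k ∈ Finset.range n, (sylvester n - 1) / sylvester k) + 1 = sylvester n - 1 := by
  induction n, hn using Nat.le_induction with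
  | base => simp [sylvester]
  | succ n hn ih =>
    have h2 : 2 ≤ sylvester n := sylvester_two_le n
    rw [Finset.sum_range_succ]
    have hlast : (sylvester (n + 1) - 1) / sylvester n = sylvester n - 1 := by
      rw [sylvester_succ_sub_one, Nat.mul_div_cancel_left _ (by omega)]
    have hsum : ∑ k ∈ Finset.range n, (sylvester (n + 1) - 1) / sylvester k
        = sylvester n * ∑ k ∈ Finset.range n, (sylvester n - 1) / sylvester k := by
      rw [Finset.mul_sum]
      refine Finset.sum_congr rfl fun k hk => ?_
      rw [sylvester_succ_sub_one, Nat.mul_div_assoc _ (sylvester_dvd k n (Finset.mem_range.mp hk))]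
    rw [hsum, hlast, sylvester_succ_sub_one]
    have : ∑ k ∈ Finset.range n, (sylvester n - 1) / sylvester k = sylvester n - 2 := by omega
    rw [this]
    have : sylvester n * (sylvester n - 2) + (sylvester n - 1) + 1 =
        sylvester n * (sylvester n - 2) + sylvester n := by omega
    rw [this, ← Nat.mul_succ]
    congr 1
    omega

theorem gorenstein_canonical_weights (n : ℕ) (hn : 1 ≤ n) :
    1 + (∑ i ∈ Finset.Icc 1 n, (sylvester n - 1) / sylvester (n - i)) = sylvester n - 1
    ∧ ∀ i ∈ Finset.Icc 1 n, (sylvester n - 1) / sylvester (n - i) ∣ sylvester n - 1 := by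
  constructor
  · have hre : ∑ i ∈ Finset.Icc 1 n, (sylvester n - 1) / sylvester (n - i)
        = ∑ k ∈ Finset.range n, (sylvester n - 1) / sylvester k := by
      refine Finset.sum_nbij' (fun i => n - i) (fun k => n - k) ?_ ?_ ?_ ?_ ?_
      · intro i hi; simp only [Finset.mem_Icc] at hi; simp; omega
      · intro k hk; simp only [Finset.mem_range] at hk; simp [Finset.mem_Icc]; omega
      · intro i hi; simp only [Finset.mem_Icc] at hi; show n - (n - i) = i; omega
      · intro k hk; simp only [Finset.mem_range] at hk; show n - (n - k) = k; omega
      · intro i hi; rfl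
    rw [hre, Nat.add_comm, sylvester_sum n hn]
  · intro i hi
    simp only [Finset.mem_Icc] at hi
    have hd : sylvester (n - i) ∣ sylvester n - 1 := sylvester_dvd _ _ (by omega)
    exact Nat.div_dvd_of_dvd hd
end
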